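/- Let q be a prime and let h ∈ F_q[[t]] with h = t + O(t^2) satisfy Θh = -h^2 where Θf = -t^2 f'. Write h^{q+1} = Σ_{n ≥ q+1} a_n(q+1) t^n. Then a_{q^i+1}(q+1) = 0 for all integers i ≥ 2. -/

import Mathlib

open PowerSeries Finset

section Aux
variable {q : ℕ} [Fact q.Prime]

/-- Frobenius on coefficients: `coeff (q*m) (f^q) = coeff m f` over `ZMod q`. -/
lemma aux_coeff_pow_card (f : PowerSeries (ZMod q)) (m : ℕ) :
    PowerSeries.coeff (q * m) (f ^ q) = PowerSeries.coeff m f := by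
  have hq : 0 < q := (Fact.out : q.Prime).pos
  set P : Polynomial (ZMod q) := PowerSeries.trunc (q * m + 1) f with hP
  have hdvd : (PowerSeries.X : PowerSeries (ZMod q)) ^ (q * m + 1) ∣
      f ^ q - (P : PowerSeries (ZMod q)) ^ q := by
    refine dvd_trans ?_ (sub_dvd_pow_sub_pow f (P : PowerSeries (ZMod q)) q)
    rw [PowerSeries.X_pow_dvd_iff]
    intro n hn
    rw [map_sub, Polynomial.coeff_coe, hP, PowerSeries.coeff_trunc, if_pos hn, sub_self]
  have hcoeff : PowerSeries.coeff (q * m)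
      (f ^ q - (P : PowerSeries (ZMod q)) ^ q) = 0 := by
    obtain ⟨g, hg⟩ := hdvd
    rw [hg, PowerSeries.coeff_X_pow_mul']
    simp
  have h1 : PowerSeries.coeff (q * m) (f ^ q)
      = PowerSeries.coeff (q * m) ((P : PowerSeries (ZMod q)) ^ q) := by
    rw [map_sub] at hcoeff
    exact sub_eq_zero.mp hcoeff
  rw [h1, ← Polynomial.coe_pow, Polynomial.coeff_coe]
  have hfr : P ^ q = Polynomial.expand (ZMod q) q P := by
    exact (ZMod.expand_card P).symm
  rw [hfr, Polynomial.coeff_expand_mul' hq, hP, PowerSeries.coeff_trunc,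
    if_pos (by nlinarith : m < q * m + 1)]

end Aux

/-- for `q` prime and `h = t + O(t²) ∈ 𝔽_q⟦t⟧` with `Θh = -h²`
(`Θf = -t²f'`), writing `h^{q+1} = Σ aₙ tⁿ`, one has `a_{qⁱ+1} = 0` for all `i ≥ 2`. -/
theorem coeff_h_pow_q_add_one_vanishes (q : ℕ) [Fact q.Prime]
    (h : PowerSeries (ZMod q))
    (h0 : PowerSeries.coeff 0 h = 0)
    (h1 : PowerSeries.coeff 1 h = 1)
    (hh : -(PowerSeries.X ^ 2 * PowerSeries.derivative (ZMod q) h) = -h ^ 2) :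
    ∀ i : ℕ, 2 ≤ i → PowerSeries.coeff (q ^ i + 1) (h ^ (q + 1)) = 0 := by
  have hprime : q.Prime := Fact.out
  have hq2 : 2 ≤ q := hprime.two_le
  have key : (PowerSeries.X : PowerSeries (ZMod q)) ^ 2 * PowerSeries.derivative (ZMod q) h
      = h ^ 2 := neg_inj.mp hh
  -- the basic recurrence coming from the ODE
  have B : ∀ k n : ℕ, ((n : ZMod q) + 1) * PowerSeries.coeff (n + 1) (h ^ (k + 1))
      = ((k : ZMod q) + 1) * PowerSeries.coeff (n + 2) (h ^ (k + 2)) := by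
    intro k n
    have hd : (PowerSeries.X : PowerSeries (ZMod q)) ^ 2
        * PowerSeries.derivative (ZMod q) (h ^ (k + 1)) = (k + 1) • h ^ (k + 2) := by
      rw [Derivation.leibniz_pow, Nat.add_sub_cancel, smul_eq_mul, nsmul_eq_mul, nsmul_eq_mul]
      push_cast
      linear_combination (((k : (ZMod q)⟦X⟧) + 1) * h ^ k) * key
    have hc := congrArg (PowerSeries.coeff (n + 2)) hd
    rw [map_nsmul, nsmul_eq_mul, PowerSeries.coeff_X_pow_mul, PowerSeries.coeff_derivative] at hc
    push_cast at hc ⊢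
    linear_combination hc
  -- the iterated recurrence
  have C : ∀ n0 j : ℕ,
      (∏ l ∈ range j, (((q + 1 + l : ℕ) : ZMod q)))
        * PowerSeries.coeff (n0 + 1 + j) (h ^ (q + 1 + j))
      = (∏ l ∈ range j, (((n0 + 1 + l : ℕ) : ZMod q)))
        * PowerSeries.coeff (n0 + 1) (h ^ (q + 1)) := by
    intro n0 j
    induction j with
    | zero => simp
    | succ j ih =>
      rw [prod_range_succ, prod_range_succ]
      have hB := B (q + j) (n0 + j)
      have e1 : n0 + 1 + (j + 1) = n0 + j + 2 := by ring
      have e2 : q + 1 + (j + 1) = q + j + 2 := by ring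
      have e3 : n0 + 1 + j = n0 + j + 1 := by ring
      have e4 : q + 1 + j = q + j + 1 := by ring
      rw [e1, e2]
      have e5 : ((q + 1 + j : ℕ) : ZMod q) = (q + j : ZMod q) + 1 := by push_cast; ring
      have e6 : ((n0 + 1 + j : ℕ) : ZMod q) = (n0 + j : ZMod q) + 1 := by push_cast; ring
      rw [e5, e6]
      have hB' : PowerSeries.coeff (n0 + j + 2) (h ^ (q + j + 2))
          * ((q : ZMod q) + j + 1) = ((n0 : ZMod q) + j + 1)
          * PowerSeries.coeff (n0 + j + 1) (h ^ (q + j + 1)) := by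
        push_cast at hB
        linear_combination -hB
      rw [e3, e4] at ih
      calc (∏ l ∈ range j, (((q + 1 + l : ℕ) : ZMod q))) * ((q + j : ZMod q) + 1)
            * PowerSeries.coeff (n0 + j + 2) (h ^ (q + j + 2))
          = (∏ l ∈ range j, (((q + 1 + l : ℕ) : ZMod q)))
            * (PowerSeries.coeff (n0 + j + 2) (h ^ (q + j + 2))
              * ((q : ZMod q) + j + 1)) := by push_cast; ring
        _ = (∏ l ∈ range j, (((q + 1 + l : ℕ) : ZMod q)))
            * (((n0 : ZMod q) + j + 1)
              * PowerSeries.coeff (n0 + j + 1) (h ^ (q + j + 1))) := by rw [hB']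
        _ = ((n0 : ZMod q) + j + 1) * ((∏ l ∈ range j, (((q + 1 + l : ℕ) : ZMod q)))
              * PowerSeries.coeff (n0 + j + 1) (h ^ (q + j + 1))) := by ring
        _ = ((n0 : ZMod q) + j + 1) * ((∏ l ∈ range j, (((n0 + 1 + l : ℕ) : ZMod q)))
              * PowerSeries.coeff (n0 + 1) (h ^ (q + 1))) := by rw [ih]
        _ = (∏ l ∈ range j, (((n0 + 1 + l : ℕ) : ZMod q))) * ((n0 + j : ZMod q) + 1)
              * PowerSeries.coeff (n0 + 1) (h ^ (q + 1)) := by push_cast; ring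
  intro i hi
  obtain ⟨i', rfl⟩ : ∃ i', i = i' + 2 := ⟨i - 2, by omega⟩
  obtain ⟨p, hp⟩ : ∃ p, q = p + 1 := ⟨q - 1, by omega⟩
  -- specialize the iterated recurrence at j = q - 1 = p, n0 = q^i
  have hC := C (q ^ (i' + 2)) p
  -- the two products are equal and nonzero
  have hq0 : ((q : ℕ) : ZMod q) = 0 := ZMod.natCast_self q
  have hprod1 : ∀ l ∈ range p, (((q + 1 + l : ℕ) : ZMod q)) = ((1 + l : ℕ) : ZMod q) := by
    intro l _; push_cast; rw [hq0]; ring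
  have hprod2 : ∀ l ∈ range p,
      (((q ^ (i' + 2) + 1 + l : ℕ) : ZMod q)) = ((1 + l : ℕ) : ZMod q) := by
    intro l _; push_cast; rw [hq0]; ring
  rw [Finset.prod_congr rfl hprod1, Finset.prod_congr rfl hprod2] at hC
  have hprodne : (∏ l ∈ range p, ((1 + l : ℕ) : ZMod q)) ≠ 0 := by
    rw [Finset.prod_ne_zero_iff]
    intro l hl
    rw [Finset.mem_range] at hl
    have : ¬ (q ∣ 1 + l) := by
      intro hdd
      have := Nat.le_of_dvd (by omega) hdd
      omega
    intro heq
    exact this ((ZMod.natCast_eq_zero_iff _ _).mp heq)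
  -- the left coefficient is a coefficient of h^(2q) at an index divisible by q
  have e7 : q ^ (i' + 2) + 1 + p = q * (q ^ (i' + 1) + 1) := by
    have : q * (q ^ (i' + 1) + 1) = q ^ (i' + 2) + q := by ring
    omega
  have e8 : q + 1 + p = 2 * q := by omega
  rw [e7, e8] at hC
  have e9 : h ^ (2 * q) = (h ^ 2) ^ q := by rw [pow_mul]
  rw [e9, aux_coeff_pow_card (h ^ 2) (q ^ (i' + 1) + 1)] at hC
  -- that coefficient of h² vanishes
  obtain ⟨d, hd⟩ : ∃ d, q ^ (i' + 1) = d + 1 :=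
    ⟨q ^ (i' + 1) - 1, by have := Nat.one_le_pow (i' + 1) q (by omega); omega⟩
  have hz : PowerSeries.coeff (q ^ (i' + 1) + 1) (h ^ 2) = 0 := by
    rw [← key, hd]
    have e10 : d + 1 + 1 = d + 2 := by ring
    rw [e10, PowerSeries.coeff_X_pow_mul, PowerSeries.coeff_derivative]
    have : ((d : ZMod q) + 1) = 0 := by
      have : ((d + 1 : ℕ) : ZMod q) = ((q ^ (i' + 1) : ℕ) : ZMod q) := by rw [hd]
      push_cast at this
      rw [hq0] at this
      rw [this]; ring
    rw [this, mul_zero]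
  rw [hz, mul_zero] at hC
  exact (mul_eq_zero.mp hC.symm).resolve_left hprodne
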